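/- Fix integers n1, n2 ≥ 3 and θ = (φ, ρ11, ρ12, ρ21, ρ22) ∈ ℝ^5. The characteristic polynomial of the 2n×2n real symmetric matrix Q̃_{n1,n2}(θ) equals the product over i ∈ {0,…,n2−1} and j ∈ {0,…,n1−1} of the real quadratic factors (X² − (a_{ij} + d_{ij})·X + (a_{ij}·d_{ij} − |b_{ij}|²)). (Full spectrum of the block-circulant approximation via its unitary block-diagonalization into 2×2 Hermitian blocks.) -/

import Mathlib

open Matrix

/-- Smallest element of the real spectrum of a real (symmetric) matrix. -/
noncomputable def lamMin {m : Type} [Fintype m] [DecidableEq m] (M : Matrix m m ℝ) : ℝ :=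
  sInf (spectrum ℝ M)

/-- Block-Toeplitz block `T_{n1,n2}(x,y,z)`, indexed by pairs `(a,b)` with
`a ∈ Fin n2`, `b ∈ Fin n1`. -/
def Tmat (n1 n2 : ℕ) (x y z : ℝ) :
    Matrix (Fin n2 × Fin n1) (Fin n2 × Fin n1) ℝ := fun p q =>
  if q = p then y
  else if (q.1 = p.1 ∧ (q.2 : ℕ) = (p.2 : ℕ) + 1) ∨ (q.2 = p.2 ∧ (q.1 : ℕ) = (p.1 : ℕ) + 1) then z
  else if (q.1 = p.1 ∧ (q.2 : ℕ) + 1 = (p.2 : ℕ)) ∨ (q.2 = p.2 ∧ (q.1 : ℕ) + 1 = (p.1 : ℕ)) then x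
  else 0

/-- Block-circulant block `C_{n1,n2}(x,y,z)`. -/
def Cmat (n1 n2 : ℕ) (x y z : ℝ) :
    Matrix (Fin n2 × Fin n1) (Fin n2 × Fin n1) ℝ := fun p q =>
  if q = p then y
  else if (q.1 = p.1 ∧ (q.2 : ℕ) = ((p.2 : ℕ) + 1) % n1) ∨
          (q.2 = p.2 ∧ (q.1 : ℕ) = ((p.1 : ℕ) + 1) % n2) then z
  else if (q.1 = p.1 ∧ ((q.2 : ℕ) + 1) % n1 = (p.2 : ℕ)) ∨
          (q.2 = p.2 ∧ ((q.1 : ℕ) + 1) % n2 = (p.1 : ℕ)) then x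
  else 0

/-- The precision matrix `Q_{n1,n2}(θ)`, `θ = (φ, ρ11, ρ12, ρ21, ρ22)`. -/
def Qmat (n1 n2 : ℕ) (φ ρ11 ρ12 ρ21 ρ22 : ℝ) :
    Matrix ((Fin n2 × Fin n1) ⊕ (Fin n2 × Fin n1)) ((Fin n2 × Fin n1) ⊕ (Fin n2 × Fin n1)) ℝ :=
  Matrix.fromBlocks (Tmat n1 n2 ρ11 1 ρ11) (Tmat n1 n2 ρ21 φ ρ12)
    (Tmat n1 n2 ρ21 φ ρ12)ᵀ (Tmat n1 n2 ρ22 1 ρ22)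

/-- The block-circulant (toroidal) approximation `Q̃_{n1,n2}(θ)`. -/
def Qcmat (n1 n2 : ℕ) (φ ρ11 ρ12 ρ21 ρ22 : ℝ) :
    Matrix ((Fin n2 × Fin n1) ⊕ (Fin n2 × Fin n1)) ((Fin n2 × Fin n1) ⊕ (Fin n2 × Fin n1)) ℝ :=
  Matrix.fromBlocks (Cmat n1 n2 ρ11 1 ρ11) (Cmat n1 n2 ρ21 φ ρ12)
    (Cmat n1 n2 ρ21 φ ρ12)ᵀ (Cmat n1 n2 ρ22 1 ρ22)


namespace CPAux

lemma succ_mod_cases (n b : ℕ) (hb : b < n) :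
    ((b+1) % n = b+1 ∧ b+1 < n) ∨ ((b+1) % n = 0 ∧ b+1 = n) := by
  rcases eq_or_lt_of_le (Nat.succ_le_of_lt hb) with h | h
  · right; rw [← h]; simp [Nat.mod_self]
  · left; exact ⟨Nat.mod_eq_of_lt h, h⟩

lemma pred_mod_cases (n b : ℕ) (hb : b < n) :
    ((b + (n-1)) % n = b - 1 ∧ 1 ≤ b) ∨ ((b + (n-1)) % n = n - 1 ∧ b = 0) := by
  rcases Nat.eq_zero_or_pos b with h | h
  · right
    subst h
    simp [Nat.mod_eq_of_lt (by omega : n - 1 < n)]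
  · left
    have hbn : b + (n-1) = (b-1) + n := by omega
    rw [hbn, Nat.add_mod_right, Nat.mod_eq_of_lt (by omega)]
    exact ⟨rfl, h⟩

lemma mod_lemma1 (n b : ℕ) (hb : b < n) : ((b+1) % n + (n-1)) % n = b := by
  rw [Nat.mod_add_mod, show b + 1 + (n-1) = b + n by omega, Nat.add_mod_right,
    Nat.mod_eq_of_lt hb]

lemma mod_lemma2 (n b : ℕ) (hb : b < n) : ((b + (n-1)) % n + 1) % n = b := by
  rw [Nat.mod_add_mod, show b + (n-1) + 1 = b + n by omega, Nat.add_mod_right,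
    Nat.mod_eq_of_lt hb]

lemma pow_mod_eq_pow {ζ : ℂ} {n : ℕ} (h : ζ ^ n = 1) (a : ℕ) :
    ζ ^ (a % n) = ζ ^ a := by
  conv_rhs => rw [← Nat.div_add_mod a n]
  rw [pow_add, pow_mul, h, one_pow, one_mul]

/-- primitive `n`-th root of unity -/
noncomputable def rt (n : ℕ) : ℂ := Complex.exp (2 * Real.pi * Complex.I / n)

lemma rt_pow {n : ℕ} (hn : n ≠ 0) : rt n ^ n = 1 := by
  rw [rt, ← Complex.exp_nat_mul, mul_div_cancel₀ _ (by exact_mod_cast hn : (n:ℂ) ≠ 0),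
    Complex.exp_two_pi_mul_I]

lemma rt_mul_star (n : ℕ) : rt n * star (rt n) = 1 := by
  have h : (star (rt n) : ℂ) = Complex.exp (-(2 * Real.pi * Complex.I / n)) := by
    show (starRingEnd ℂ) (rt n) = _
    rw [rt, ← Complex.exp_conj]
    congr 1
    rw [map_div₀, _root_.map_mul, _root_.map_mul, Complex.conj_I]
    simp only [Complex.conj_ofReal, map_ofNat, Complex.conj_natCast]
    ring
  rw [rt] at h ⊢
  rw [h, ← Complex.exp_add, add_neg_cancel, Complex.exp_zero]

lemma star_rt {n : ℕ} (hn : n ≠ 0) : star (rt n) = rt n ^ (n - 1) := by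
  have h1 : rt n * rt n ^ (n-1) = 1 := by
    rw [← pow_succ', show n - 1 + 1 = n by omega, rt_pow hn]
  have := rt_mul_star n
  calc star (rt n) = star (rt n) * (rt n * rt n ^ (n-1)) := by rw [h1, mul_one]
    _ = (rt n * star (rt n)) * rt n ^ (n-1) := by ring
    _ = rt n ^ (n-1) := by rw [this, one_mul]

lemma star_rt_pow {n : ℕ} (hn : n ≠ 0) (k : ℕ) :
    star (rt n ^ k) = rt n ^ ((n-1) * k) := by
  rw [star_pow, star_rt hn, ← pow_mul]

lemma rt_pow_mul_mod {n : ℕ} (hn : n ≠ 0) (a b : ℕ) :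
    rt n ^ ((a % n) * b) = rt n ^ (a * b) := by
  rw [mul_comm _ b, pow_mul, mul_comm a b, pow_mul,
    pow_mod_eq_pow (by rw [← pow_mul, mul_comm, pow_mul, rt_pow hn, one_pow])]






/-- cyclic successor on second coordinate -/
def s1 (n1 n2 : ℕ) [NeZero n1] (p : Fin n2 × Fin n1) : Fin n2 × Fin n1 :=
  (p.1, ⟨((p.2 : ℕ) + 1) % n1, Nat.mod_lt _ (Nat.pos_of_ne_zero (NeZero.ne n1))⟩)

def t1 (n1 n2 : ℕ) [NeZero n1] (p : Fin n2 × Fin n1) : Fin n2 × Fin n1 :=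
  (p.1, ⟨((p.2 : ℕ) + (n1 - 1)) % n1, Nat.mod_lt _ (Nat.pos_of_ne_zero (NeZero.ne n1))⟩)

def s2 (n1 n2 : ℕ) [NeZero n2] (p : Fin n2 × Fin n1) : Fin n2 × Fin n1 :=
  (⟨((p.1 : ℕ) + 1) % n2, Nat.mod_lt _ (Nat.pos_of_ne_zero (NeZero.ne n2))⟩, p.2)

def t2 (n1 n2 : ℕ) [NeZero n2] (p : Fin n2 × Fin n1) : Fin n2 × Fin n1 :=
  (⟨((p.1 : ℕ) + (n2 - 1)) % n2, Nat.mod_lt _ (Nat.pos_of_ne_zero (NeZero.ne n2))⟩, p.2)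

/-- 0-1 shift matrix of a map -/
def Sm {n1 n2 : ℕ} (σ : Fin n2 × Fin n1 → Fin n2 × Fin n1) :
    Matrix (Fin n2 × Fin n1) (Fin n2 × Fin n1) ℂ :=
  Matrix.of fun p q => if q = σ p then 1 else 0

/-- complex version of `Cmat` -/
def CmatC (n1 n2 : ℕ) (x y z : ℂ) :
    Matrix (Fin n2 × Fin n1) (Fin n2 × Fin n1) ℂ := fun p q =>
  if q = p then y
  else if (q.1 = p.1 ∧ (q.2 : ℕ) = ((p.2 : ℕ) + 1) % n1) ∨
          (q.2 = p.2 ∧ (q.1 : ℕ) = ((p.1 : ℕ) + 1) % n2) then z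
  else if (q.1 = p.1 ∧ ((q.2 : ℕ) + 1) % n1 = (p.2 : ℕ)) ∨
          (q.2 = p.2 ∧ ((q.1 : ℕ) + 1) % n2 = (p.1 : ℕ)) then x
  else 0



lemma eq_s1_iff (n1 n2 : ℕ) [NeZero n1] (p q : Fin n2 × Fin n1) :
    (q.1 = p.1 ∧ (q.2 : ℕ) = ((p.2 : ℕ) + 1) % n1) ↔ q = s1 n1 n2 p := by
  simp [s1, Prod.ext_iff, Fin.ext_iff]

lemma eq_s2_iff (n1 n2 : ℕ) [NeZero n2] (p q : Fin n2 × Fin n1) :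
    (q.2 = p.2 ∧ (q.1 : ℕ) = ((p.1 : ℕ) + 1) % n2) ↔ q = s2 n1 n2 p := by
  simp [s2, Prod.ext_iff, Fin.ext_iff]; tauto

lemma eq_t1_iff (n1 n2 : ℕ) [NeZero n1] (p q : Fin n2 × Fin n1) :
    (q.1 = p.1 ∧ ((q.2 : ℕ) + 1) % n1 = (p.2 : ℕ)) ↔ q = t1 n1 n2 p := by
  simp only [t1, Prod.ext_iff, Fin.ext_iff]
  constructor
  · rintro ⟨h, h'⟩
    exact ⟨h, by rw [← h', mod_lemma1 n1 _ q.2.isLt]⟩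
  · rintro ⟨h, h'⟩
    exact ⟨h, by rw [h', mod_lemma2 n1 _ p.2.isLt]⟩

lemma eq_t2_iff (n1 n2 : ℕ) [NeZero n2] (p q : Fin n2 × Fin n1) :
    (q.2 = p.2 ∧ ((q.1 : ℕ) + 1) % n2 = (p.1 : ℕ)) ↔ q = t2 n1 n2 p := by
  simp only [t2, Prod.ext_iff, Fin.ext_iff]
  constructor
  · rintro ⟨h, h'⟩
    exact ⟨by rw [← h', mod_lemma1 n2 _ q.1.isLt], h⟩
  · rintro ⟨h, h'⟩
    exact ⟨h', by rw [h, mod_lemma2 n2 _ p.1.isLt]⟩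

lemma CmatC_eq' (n1 n2 : ℕ) [NeZero n1] [NeZero n2] (x y z : ℂ) (p q : Fin n2 × Fin n1) :
    CmatC n1 n2 x y z p q =
      if q = p then y
      else if q = s1 n1 n2 p ∨ q = s2 n1 n2 p then z
      else if q = t1 n1 n2 p ∨ q = t2 n1 n2 p then x
      else 0 := by
  rw [CmatC]
  simp only [eq_s1_iff n1 n2 p q, eq_s2_iff n1 n2 p q, eq_t1_iff n1 n2 p q, eq_t2_iff n1 n2 p q]

lemma five_distinct (n1 n2 : ℕ) [NeZero n1] [NeZero n2] (h1 : 3 ≤ n1) (h2 : 3 ≤ n2)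
    (p : Fin n2 × Fin n1) :
    (s1 n1 n2 p ≠ p ∧ s2 n1 n2 p ≠ p ∧ t1 n1 n2 p ≠ p ∧ t2 n1 n2 p ≠ p) ∧
    (s1 n1 n2 p ≠ s2 n1 n2 p ∧ s1 n1 n2 p ≠ t1 n1 n2 p ∧ s1 n1 n2 p ≠ t2 n1 n2 p ∧
     s2 n1 n2 p ≠ t1 n1 n2 p ∧ s2 n1 n2 p ≠ t2 n1 n2 p ∧ t1 n1 n2 p ≠ t2 n1 n2 p) := by
  have hp1 : (p.1 : ℕ) < n2 := p.1.isLt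
  have hp2 : (p.2 : ℕ) < n1 := p.2.isLt
  have c1 := succ_mod_cases n1 (p.2 : ℕ) hp2
  have c3 := succ_mod_cases n2 (p.1 : ℕ) hp1
  have d1 := pred_mod_cases n1 (p.2 : ℕ) hp2
  have d3 := pred_mod_cases n2 (p.1 : ℕ) hp1
  simp only [s1, s2, t1, t2, Ne, Prod.ext_iff, Fin.ext_iff, not_and]
  omega

set_option maxHeartbeats 1000000 in
lemma CmatC_decomp (n1 n2 : ℕ) [NeZero n1] [NeZero n2] (h1 : 3 ≤ n1) (h2 : 3 ≤ n2)
    (x y z : ℂ) :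
    CmatC n1 n2 x y z
      = y • 1 + z • (Sm (s1 n1 n2) + Sm (s2 n1 n2)) + x • (Sm (t1 n1 n2) + Sm (t2 n1 n2)) := by
  ext p q
  obtain ⟨⟨hd1, hd2, hd3, hd4⟩, he1, he2, he3, he4, he5, he6⟩ := five_distinct n1 n2 h1 h2 p
  rw [CmatC_eq']
  simp only [Matrix.add_apply, Matrix.smul_apply, Matrix.one_apply, Sm, Matrix.of_apply,
    smul_eq_mul]
  by_cases h0 : q = p
  · subst h0
    simp [Ne.symm hd1, Ne.symm hd2, Ne.symm hd3, Ne.symm hd4]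
  · by_cases hA : q = s1 n1 n2 p
    · subst hA
      simp [h0, he1, he2, he3, Ne.symm hd1]
    · by_cases hB : q = s2 n1 n2 p
      · subst hB
        simp [h0, Ne.symm he1, he4, he5, Ne.symm hd2]
      · by_cases hC : q = t1 n1 n2 p
        · subst hC
          simp [h0, Ne.symm he2, Ne.symm he4, he6, Ne.symm hd3]
        · by_cases hD : q = t2 n1 n2 p
          · subst hD
            simp [h0, Ne.symm he3, Ne.symm he5, Ne.symm he6, Ne.symm hd4]
          · simp [h0, hA, hB, hC, hD, Ne.symm h0]


/-- 2-D Fourier matrix. -/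
noncomputable def Fm (n1 n2 : ℕ) : Matrix (Fin n2 × Fin n1) (Fin n2 × Fin n1) ℂ :=
  Matrix.of fun p q => rt n2 ^ ((p.1 : ℕ) * (q.1 : ℕ)) * rt n1 ^ ((p.2 : ℕ) * (q.2 : ℕ))

noncomputable def wf (n1 n2 : ℕ) (q : Fin n2 × Fin n1) : ℂ :=
  rt n2 ^ (q.1 : ℕ) + rt n1 ^ (q.2 : ℕ)

lemma Sm_mul (n1 n2 : ℕ) (σ : Fin n2 × Fin n1 → Fin n2 × Fin n1)
    (F : Matrix (Fin n2 × Fin n1) (Fin n2 × Fin n1) ℂ) :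
    Sm σ * F = Matrix.of fun p q => F (σ p) q := by
  ext p q
  simp [Sm, Matrix.mul_apply, ite_mul]

lemma Fm_s1 (n1 n2 : ℕ) [NeZero n1] (p q : Fin n2 × Fin n1) :
    Fm n1 n2 (s1 n1 n2 p) q = rt n1 ^ (q.2 : ℕ) * Fm n1 n2 p q := by
  have hn1 : n1 ≠ 0 := NeZero.ne n1
  simp only [Fm, Matrix.of_apply, s1]
  rw [rt_pow_mul_mod hn1, add_mul, one_mul, pow_add]
  ring

lemma Fm_s2 (n1 n2 : ℕ) [NeZero n2] (p q : Fin n2 × Fin n1) :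
    Fm n1 n2 (s2 n1 n2 p) q = rt n2 ^ (q.1 : ℕ) * Fm n1 n2 p q := by
  have hn2 : n2 ≠ 0 := NeZero.ne n2
  simp only [Fm, Matrix.of_apply, s2]
  rw [rt_pow_mul_mod hn2, add_mul, one_mul, pow_add]
  ring

lemma Fm_t1 (n1 n2 : ℕ) [NeZero n1] (p q : Fin n2 × Fin n1) :
    Fm n1 n2 (t1 n1 n2 p) q = star (rt n1 ^ (q.2 : ℕ)) * Fm n1 n2 p q := by
  have hn1 : n1 ≠ 0 := NeZero.ne n1
  simp only [Fm, Matrix.of_apply, t1]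
  rw [rt_pow_mul_mod hn1, add_mul, pow_add, star_rt_pow hn1]
  ring

lemma Fm_t2 (n1 n2 : ℕ) [NeZero n2] (p q : Fin n2 × Fin n1) :
    Fm n1 n2 (t2 n1 n2 p) q = star (rt n2 ^ (q.1 : ℕ)) * Fm n1 n2 p q := by
  have hn2 : n2 ≠ 0 := NeZero.ne n2
  simp only [Fm, Matrix.of_apply, t2]
  rw [rt_pow_mul_mod hn2, add_mul, pow_add, star_rt_pow hn2]
  ring

/-- The key diagonalization identity for a single circulant block. -/
lemma Cmul (n1 n2 : ℕ) [NeZero n1] [NeZero n2] (h1 : 3 ≤ n1) (h2 : 3 ≤ n2) (x y z : ℂ) :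
    CmatC n1 n2 x y z * Fm n1 n2 =
      Fm n1 n2 * Matrix.diagonal (fun q => y + z * wf n1 n2 q + x * star (wf n1 n2 q)) := by
  rw [CmatC_decomp n1 n2 h1 h2]
  ext p q
  simp only [Matrix.add_mul, Matrix.smul_mul, Matrix.one_mul, Sm_mul,
    Matrix.add_apply, Matrix.smul_apply, Matrix.of_apply, smul_eq_mul,
    Matrix.mul_diagonal, Fm_s1, Fm_s2, Fm_t1, Fm_t2, wf]
  rw [star_add]
  ring

lemma Sm_transpose (n1 n2 : ℕ) (σ τ : Fin n2 × Fin n1 → Fin n2 × Fin n1)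
    (hτσ : ∀ p, τ (σ p) = p) (hστ : ∀ p, σ (τ p) = p) :
    (Sm σ)ᵀ = Sm τ := by
  ext p q
  simp only [Matrix.transpose_apply, Sm, Matrix.of_apply]
  congr 1
  apply propext
  constructor
  · rintro rfl; rw [hτσ]
  · rintro rfl; rw [hστ]

lemma st_inv1 (n1 n2 : ℕ) [NeZero n1] : (∀ p, t1 n1 n2 (s1 n1 n2 p) = p)
    ∧ (∀ p, s1 n1 n2 (t1 n1 n2 p) = p) := by
  constructor <;> intro p <;>
    simp [s1, t1, Prod.ext_iff, Fin.ext_iff, mod_lemma1 n1 _ p.2.isLt,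
      mod_lemma2 n1 _ p.2.isLt]

lemma st_inv2 (n1 n2 : ℕ) [NeZero n2] : (∀ p, t2 n1 n2 (s2 n1 n2 p) = p)
    ∧ (∀ p, s2 n1 n2 (t2 n1 n2 p) = p) := by
  constructor <;> intro p <;>
    simp [s2, t2, Prod.ext_iff, Fin.ext_iff, mod_lemma1 n2 _ p.1.isLt,
      mod_lemma2 n2 _ p.1.isLt]

lemma CmatC_transpose (n1 n2 : ℕ) [NeZero n1] [NeZero n2] (h1 : 3 ≤ n1) (h2 : 3 ≤ n2)
    (x y z : ℂ) : (CmatC n1 n2 x y z)ᵀ = CmatC n1 n2 z y x := by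
  rw [CmatC_decomp n1 n2 h1 h2 x y z, CmatC_decomp n1 n2 h1 h2 z y x]
  simp only [Matrix.transpose_add, Matrix.transpose_smul, Matrix.transpose_one,
    Sm_transpose n1 n2 (s1 n1 n2) (t1 n1 n2) (st_inv1 n1 n2).1 (st_inv1 n1 n2).2,
    Sm_transpose n1 n2 (s2 n1 n2) (t2 n1 n2) (st_inv2 n1 n2).1 (st_inv2 n1 n2).2,
    Sm_transpose n1 n2 (t1 n1 n2) (s1 n1 n2) (st_inv1 n1 n2).2 (st_inv1 n1 n2).1,
    Sm_transpose n1 n2 (t2 n1 n2) (s2 n1 n2) (st_inv2 n1 n2).2 (st_inv2 n1 n2).1]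
  abel


lemma dvd_imp_eq {n i j : ℕ} (hi : i < n) (hj : j < n) (h : n ∣ i + (n-1)*j) : i = j := by
  haveI : NeZero n := ⟨by omega⟩
  have h0 : ((i + (n-1)*j : ℕ) : ZMod n) = 0 := (ZMod.natCast_eq_zero_iff _ _).mpr h
  push_cast [Nat.cast_sub (by omega : 1 ≤ n)] at h0
  rw [ZMod.natCast_self] at h0
  have hij : (i : ZMod n) = (j : ZMod n) := by linear_combination h0
  have := congrArg ZMod.val hij
  rwa [ZMod.val_cast_of_lt hi, ZMod.val_cast_of_lt hj] at this

lemma char_sum (n : ℕ) (hn : n ≠ 0) (i j : Fin n) :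
    ∑ r : Fin n, rt n ^ ((i : ℕ) * (r : ℕ)) * star (rt n ^ ((j : ℕ) * (r : ℕ)))
      = if i = j then (n : ℂ) else 0 := by
  have hsum : ∀ r : Fin n,
      rt n ^ ((i : ℕ) * (r : ℕ)) * star (rt n ^ ((j : ℕ) * (r : ℕ)))
        = (rt n ^ ((i : ℕ) + (n-1) * (j : ℕ))) ^ (r : ℕ) := by
    intro r
    rw [star_rt_pow hn, ← pow_mul, ← pow_add]
    congr 1
    ring
  simp only [hsum]
  have hζn : (rt n ^ ((i : ℕ) + (n-1) * (j : ℕ))) ^ n = 1 := by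
    rw [← pow_mul, mul_comm, pow_mul, rt_pow hn, one_pow]
  by_cases hij : i = j
  · subst hij
    have he : (i : ℕ) + (n-1) * (i : ℕ) = n * (i : ℕ) := by
      rw [Nat.sub_one_mul]
      have := Nat.le_mul_of_pos_left (i : ℕ) (by omega : 0 < n)
      omega
    rw [he, pow_mul, rt_pow hn, one_pow]
    simp [Finset.card_univ]
  · have hζ1 : rt n ^ ((i : ℕ) + (n-1) * (j : ℕ)) ≠ 1 := by
      intro hcon
      have hdvd : n ∣ (i : ℕ) + (n-1) * (j : ℕ) :=
        ((Complex.isPrimitiveRoot_exp n hn).pow_eq_one_iff_dvd _).mp hcon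
      exact hij (Fin.ext (dvd_imp_eq i.isLt j.isLt hdvd))
    rw [Fin.sum_univ_eq_sum_range (fun k => (rt n ^ ((i : ℕ) + (n-1) * (j : ℕ))) ^ k) n,
      geom_sum_eq hζ1, hζn, sub_self, zero_div, if_neg hij]

lemma Fm_mul_star (n1 n2 : ℕ) (hn1 : n1 ≠ 0) (hn2 : n2 ≠ 0) :
    Fm n1 n2 * (Fm n1 n2)ᴴ = (((n1 : ℂ) * (n2 : ℂ))) • 1 := by
  ext p q
  simp only [Matrix.mul_apply, Matrix.conjTranspose_apply, Fm, Matrix.of_apply, star_mul']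
  have hre : ∀ (r1 : Fin n2) (r2 : Fin n1),
      rt n2 ^ ((p.1 : ℕ) * (r1 : ℕ)) * rt n1 ^ ((p.2 : ℕ) * (r2 : ℕ)) *
        (star (rt n2 ^ ((q.1 : ℕ) * (r1 : ℕ))) * star (rt n1 ^ ((q.2 : ℕ) * (r2 : ℕ))))
      = (rt n2 ^ ((p.1 : ℕ) * (r1 : ℕ)) * star (rt n2 ^ ((q.1 : ℕ) * (r1 : ℕ)))) *
        (rt n1 ^ ((p.2 : ℕ) * (r2 : ℕ)) * star (rt n1 ^ ((q.2 : ℕ) * (r2 : ℕ)))) := by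
    intro r1 r2; ring
  rw [Fintype.sum_prod_type]
  simp only [hre]
  rw [← Finset.sum_mul_sum, char_sum n2 hn2 p.1 q.1, char_sum n1 hn1 p.2 q.2]
  simp only [Matrix.smul_apply, Matrix.one_apply, Prod.ext_iff, smul_eq_mul]
  by_cases hx : p.1 = q.1 <;> by_cases hy : p.2 = q.2 <;>
    simp [hx, hy] <;> ring


open Polynomial in
lemma charpoly_similar {m : Type} [Fintype m] [DecidableEq m]
    (P Q A : Matrix m m ℂ) (hPQ : P * Q = 1) :
    (P * A * Q).charpoly = A.charpoly := by
  unfold Matrix.charpoly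
  have hch : charmatrix (P * A * Q)
      = (P.map C) * charmatrix A * (Q.map C) := by
    unfold charmatrix
    simp only [RingHom.mapMatrix_apply]
    rw [Matrix.mul_sub, Matrix.sub_mul]
    congr 1
    · rw [← (Matrix.scalar_commute (X : ℂ[X]) (fun r => Commute.all _ r) (P.map C)).eq,
        Matrix.mul_assoc, ← Matrix.map_mul, hPQ,
        Matrix.map_one _ C.map_zero C.map_one, Matrix.mul_one]
    · rw [← Matrix.map_mul, ← Matrix.map_mul]
  rw [hch, Matrix.det_mul, Matrix.det_mul]
  have hdet : (P.map C).det * (Q.map C).det = 1 := by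
    rw [← Matrix.det_mul, ← Matrix.map_mul, hPQ,
      Matrix.map_one _ C.map_zero C.map_one, Matrix.det_one]
  calc (P.map C).det * (charmatrix A).det * (Q.map C).det
      = (charmatrix A).det * ((P.map C).det * (Q.map C).det) := by ring
    _ = (charmatrix A).det := by rw [hdet, mul_one]

open Polynomial in
lemma charmatrix_blockDiagonal {o m : Type} [Fintype o] [DecidableEq o]
    [Fintype m] [DecidableEq m] (M : o → Matrix m m ℂ) :
    charmatrix (Matrix.blockDiagonal M)
      = Matrix.blockDiagonal (fun k => charmatrix (M k)) := by
  ext ⟨i, k⟩ ⟨j, l⟩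
  by_cases h : k = l
  · subst h
    by_cases hij : i = j
    · subst hij
      simp [charmatrix_apply, Matrix.blockDiagonal_apply]
    · rw [charmatrix_apply_ne _ _ _ (by simp [Prod.ext_iff, hij])]
      simp [Matrix.blockDiagonal_apply, charmatrix_apply_ne _ _ _ hij]
  · rw [charmatrix_apply_ne _ _ _ (by simp [Prod.ext_iff, h])]
    simp [Matrix.blockDiagonal_apply_ne _ _ _ h]

lemma charpoly_blockDiagonal {o m : Type} [Fintype o] [DecidableEq o]
    [Fintype m] [DecidableEq m] (M : o → Matrix m m ℂ) :
    (Matrix.blockDiagonal M).charpoly = ∏ k : o, (M k).charpoly := by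
  unfold Matrix.charpoly
  rw [charmatrix_blockDiagonal, Matrix.det_blockDiagonal]

open Polynomial in
lemma charpoly_fin2 (a b c d : ℂ) :
    (Matrix.of ![![a, b], ![c, d]]).charpoly
      = X ^ 2 - C (a + d) * X + C (a * d - b * c) := by
  unfold Matrix.charpoly
  rw [Matrix.det_fin_two]
  rw [charmatrix_apply_eq, charmatrix_apply_eq,
    charmatrix_apply_ne _ _ _ (by decide), charmatrix_apply_ne _ _ _ (by decide)]
  simp only [Matrix.of_apply, Matrix.cons_val', Matrix.cons_val_zero, Matrix.cons_val_one,
    Matrix.head_cons, Matrix.head_fin_const, Matrix.empty_val', Matrix.cons_val_fin_one]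
  rw [C_add, C_sub, C_mul, C_mul]
  ring

/-- pairing equivalence -/
def pe (I : Type) : (Fin 2 × I) ≃ (I ⊕ I) where
  toFun x := if x.1 = 0 then Sum.inl x.2 else Sum.inr x.2
  invFun y := Sum.elim (fun i => ((0 : Fin 2), i)) (fun i => ((1 : Fin 2), i)) y
  left_inv := by
    rintro ⟨a, i⟩
    fin_cases a <;> simp
  right_inv := by
    rintro (i | i) <;> simp

lemma fromBlocks_diag_eq_reindex {I : Type} [Fintype I] [DecidableEq I]
    (A B C' D : I → ℂ) :
    Matrix.fromBlocks (Matrix.diagonal A) (Matrix.diagonal B)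
        (Matrix.diagonal C') (Matrix.diagonal D)
      = Matrix.reindex (pe I) (pe I)
          (Matrix.blockDiagonal fun q => Matrix.of ![![A q, B q], ![C' q, D q]]) := by
  ext x y
  rcases x with i | i <;> rcases y with j | j <;>
    simp [pe, Matrix.blockDiagonal_apply, Matrix.diagonal_apply, Matrix.fromBlocks] <;>
    split_ifs <;> simp_all


lemma rt_pow_exp (n k : ℕ) (hn : n ≠ 0) :
    rt n ^ k = Complex.exp (2 * Real.pi * Complex.I * (k : ℂ) / (n : ℂ)) := by
  rw [rt, ← Complex.exp_nat_mul]
  congr 1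
  ring

lemma rt_pow_exp' (n k : ℕ) (hn : n ≠ 0) :
    rt n ^ k = Complex.exp (((2 * Real.pi * k / n : ℝ) : ℂ) * Complex.I) := by
  rw [rt_pow_exp n k hn]
  congr 1
  push_cast
  ring

lemma rt_pow_add_star (n k : ℕ) (hn : n ≠ 0) :
    rt n ^ k + star (rt n ^ k)
      = ((2 * Real.cos (2 * Real.pi * k / n) : ℝ) : ℂ) := by
  rw [rt_pow_exp' n k hn]
  have : star (Complex.exp (((2 * Real.pi * k / n : ℝ) : ℂ) * Complex.I))
      = (starRingEnd ℂ) (Complex.exp (((2 * Real.pi * k / n : ℝ) : ℂ) * Complex.I)) := rfl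
  rw [this, Complex.add_conj, Complex.exp_ofReal_mul_I_re]

lemma wf_add_star (n1 n2 : ℕ) (hn1 : n1 ≠ 0) (hn2 : n2 ≠ 0) (q : Fin n2 × Fin n1) :
    wf n1 n2 q + star (wf n1 n2 q)
      = ((2 * Real.cos (2 * Real.pi * (q.1 : ℕ) / n2)
          + 2 * Real.cos (2 * Real.pi * (q.2 : ℕ) / n1) : ℝ) : ℂ) := by
  rw [wf, star_add, Complex.ofReal_add]
  rw [show rt n2 ^ (q.1 : ℕ) + rt n1 ^ (q.2 : ℕ)
        + (star (rt n2 ^ (q.1 : ℕ)) + star (rt n1 ^ (q.2 : ℕ)))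
      = (rt n2 ^ (q.1 : ℕ) + star (rt n2 ^ (q.1 : ℕ)))
        + (rt n1 ^ (q.2 : ℕ) + star (rt n1 ^ (q.2 : ℕ))) by ring,
    rt_pow_add_star n2 _ hn2, rt_pow_add_star n1 _ hn1]

lemma Cmat_map (n1 n2 : ℕ) (x y z : ℝ) :
    (Cmat n1 n2 x y z).map (algebraMap ℝ ℂ) = CmatC n1 n2 (x : ℂ) (y : ℂ) (z : ℂ) := by
  ext p q
  simp only [Matrix.map_apply, Cmat, CmatC]
  split_ifs <;> simp

end CPAux


/-- The characteristic polynomial of `Q̃_{n1,n2}(θ)` splits into the quadratic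
factors `X² − (a+d)·X + (a·d − |b|²)` coming from its 2×2 Fourier blocks. -/
theorem circulant_precision_charpoly (n1 n2 : ℕ) (h1 : 3 ≤ n1) (h2 : 3 ≤ n2)
    (φ ρ11 ρ12 ρ21 ρ22 : ℝ)
    (w : Fin n2 × Fin n1 → ℂ)
    (hw : ∀ p : Fin n2 × Fin n1,
      w p = Complex.exp (2 * Real.pi * Complex.I * ((p.1 : ℕ) : ℂ) / (n2 : ℂ)) +
            Complex.exp (2 * Real.pi * Complex.I * ((p.2 : ℕ) : ℂ) / (n1 : ℂ)))
    (a d : Fin n2 × Fin n1 → ℝ)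
    (ha : ∀ p : Fin n2 × Fin n1,
      a p = 1 + 2 * ρ11 * (Real.cos (2 * Real.pi * ((p.1 : ℕ) : ℝ) / (n2 : ℝ)) +
                           Real.cos (2 * Real.pi * ((p.2 : ℕ) : ℝ) / (n1 : ℝ))))
    (hd : ∀ p : Fin n2 × Fin n1,
      d p = 1 + 2 * ρ22 * (Real.cos (2 * Real.pi * ((p.1 : ℕ) : ℝ) / (n2 : ℝ)) +
                           Real.cos (2 * Real.pi * ((p.2 : ℕ) : ℝ) / (n1 : ℝ))))
    (b : Fin n2 × Fin n1 → ℂ)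
    (hb : ∀ p : Fin n2 × Fin n1,
      b p = (φ : ℂ) + (ρ12 : ℂ) * w p + (ρ21 : ℂ) * (starRingEnd ℂ) (w p)) :
    (Qcmat n1 n2 φ ρ11 ρ12 ρ21 ρ22).charpoly =
      ∏ p : Fin n2 × Fin n1,
        (Polynomial.X ^ 2 - Polynomial.C (a p + d p) * Polynomial.X +
          Polynomial.C (a p * d p - ‖b p‖ ^ 2)) := by
  classical
  haveI : NeZero n1 := ⟨by omega⟩
  haveI : NeZero n2 := ⟨by omega⟩
  have hn1 : n1 ≠ 0 := by omega
  have hn2 : n2 ≠ 0 := by omega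
  refine Polynomial.map_injective (algebraMap ℝ ℂ) (RingHom.injective _) ?_
  rw [← Matrix.charpoly_map]
  have hQmap : (Qcmat n1 n2 φ ρ11 ρ12 ρ21 ρ22).map (algebraMap ℝ ℂ)
      = Matrix.fromBlocks
          (CPAux.CmatC n1 n2 (ρ11 : ℂ) 1 (ρ11 : ℂ))
          (CPAux.CmatC n1 n2 (ρ21 : ℂ) (φ : ℂ) (ρ12 : ℂ))
          (CPAux.CmatC n1 n2 (ρ21 : ℂ) (φ : ℂ) (ρ12 : ℂ))ᵀ
          (CPAux.CmatC n1 n2 (ρ22 : ℂ) 1 (ρ22 : ℂ)) := by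
    rw [Qcmat, Matrix.fromBlocks_map, Matrix.transpose_map,
      CPAux.Cmat_map, CPAux.Cmat_map, CPAux.Cmat_map, Complex.ofReal_one]
  rw [hQmap]
  have hFG : CPAux.Fm n1 n2 * (((n1 : ℂ) * (n2 : ℂ))⁻¹ • (CPAux.Fm n1 n2)ᴴ) = 1 := by
    have hne : ((n1 : ℂ) * (n2 : ℂ)) ≠ 0 :=
      mul_ne_zero (Nat.cast_ne_zero.mpr hn1) (Nat.cast_ne_zero.mpr hn2)
    rw [Matrix.mul_smul, CPAux.Fm_mul_star n1 n2 hn1 hn2, smul_smul,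
      inv_mul_cancel₀ hne, one_smul]
  have hP : Matrix.fromBlocks (CPAux.Fm n1 n2) 0 0 (CPAux.Fm n1 n2) *
      Matrix.fromBlocks (((n1 : ℂ) * (n2 : ℂ))⁻¹ • (CPAux.Fm n1 n2)ᴴ) 0 0
        (((n1 : ℂ) * (n2 : ℂ))⁻¹ • (CPAux.Fm n1 n2)ᴴ) = 1 := by
    rw [Matrix.fromBlocks_multiply]
    simp only [Matrix.mul_zero, Matrix.zero_mul, add_zero, zero_add, hFG]
    exact Matrix.fromBlocks_one
  have hsim : Matrix.fromBlocks
          (CPAux.CmatC n1 n2 (ρ11 : ℂ) 1 (ρ11 : ℂ))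
          (CPAux.CmatC n1 n2 (ρ21 : ℂ) (φ : ℂ) (ρ12 : ℂ))
          (CPAux.CmatC n1 n2 (ρ21 : ℂ) (φ : ℂ) (ρ12 : ℂ))ᵀ
          (CPAux.CmatC n1 n2 (ρ22 : ℂ) 1 (ρ22 : ℂ)) *
        Matrix.fromBlocks (CPAux.Fm n1 n2) 0 0 (CPAux.Fm n1 n2)
      = Matrix.fromBlocks (CPAux.Fm n1 n2) 0 0 (CPAux.Fm n1 n2) *
        Matrix.fromBlocks
          (Matrix.diagonal fun q => (1 : ℂ) + (ρ11 : ℂ) * CPAux.wf n1 n2 q +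
            (ρ11 : ℂ) * star (CPAux.wf n1 n2 q))
          (Matrix.diagonal fun q => (φ : ℂ) + (ρ12 : ℂ) * CPAux.wf n1 n2 q +
            (ρ21 : ℂ) * star (CPAux.wf n1 n2 q))
          (Matrix.diagonal fun q => (φ : ℂ) + (ρ21 : ℂ) * CPAux.wf n1 n2 q +
            (ρ12 : ℂ) * star (CPAux.wf n1 n2 q))
          (Matrix.diagonal fun q => (1 : ℂ) + (ρ22 : ℂ) * CPAux.wf n1 n2 q +
            (ρ22 : ℂ) * star (CPAux.wf n1 n2 q)) := by
    rw [Matrix.fromBlocks_multiply, Matrix.fromBlocks_multiply]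
    simp only [Matrix.mul_zero, Matrix.zero_mul, add_zero, zero_add]
    rw [CPAux.CmatC_transpose n1 n2 h1 h2,
      CPAux.Cmul n1 n2 h1 h2 (ρ11 : ℂ) 1 (ρ11 : ℂ),
      CPAux.Cmul n1 n2 h1 h2 (ρ21 : ℂ) (φ : ℂ) (ρ12 : ℂ),
      CPAux.Cmul n1 n2 h1 h2 (ρ12 : ℂ) (φ : ℂ) (ρ21 : ℂ),
      CPAux.Cmul n1 n2 h1 h2 (ρ22 : ℂ) 1 (ρ22 : ℂ)]
  have hexp : Matrix.fromBlocks
          (CPAux.CmatC n1 n2 (ρ11 : ℂ) 1 (ρ11 : ℂ))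
          (CPAux.CmatC n1 n2 (ρ21 : ℂ) (φ : ℂ) (ρ12 : ℂ))
          (CPAux.CmatC n1 n2 (ρ21 : ℂ) (φ : ℂ) (ρ12 : ℂ))ᵀ
          (CPAux.CmatC n1 n2 (ρ22 : ℂ) 1 (ρ22 : ℂ))
      = Matrix.fromBlocks (CPAux.Fm n1 n2) 0 0 (CPAux.Fm n1 n2) *
        Matrix.fromBlocks
          (Matrix.diagonal fun q => (1 : ℂ) + (ρ11 : ℂ) * CPAux.wf n1 n2 q +
            (ρ11 : ℂ) * star (CPAux.wf n1 n2 q))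
          (Matrix.diagonal fun q => (φ : ℂ) + (ρ12 : ℂ) * CPAux.wf n1 n2 q +
            (ρ21 : ℂ) * star (CPAux.wf n1 n2 q))
          (Matrix.diagonal fun q => (φ : ℂ) + (ρ21 : ℂ) * CPAux.wf n1 n2 q +
            (ρ12 : ℂ) * star (CPAux.wf n1 n2 q))
          (Matrix.diagonal fun q => (1 : ℂ) + (ρ22 : ℂ) * CPAux.wf n1 n2 q +
            (ρ22 : ℂ) * star (CPAux.wf n1 n2 q)) *
        Matrix.fromBlocks (((n1 : ℂ) * (n2 : ℂ))⁻¹ • (CPAux.Fm n1 n2)ᴴ) 0 0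
          (((n1 : ℂ) * (n2 : ℂ))⁻¹ • (CPAux.Fm n1 n2)ᴴ) := by
    conv_lhs => rw [← Matrix.mul_one (Matrix.fromBlocks
          (CPAux.CmatC n1 n2 (ρ11 : ℂ) 1 (ρ11 : ℂ))
          (CPAux.CmatC n1 n2 (ρ21 : ℂ) (φ : ℂ) (ρ12 : ℂ))
          (CPAux.CmatC n1 n2 (ρ21 : ℂ) (φ : ℂ) (ρ12 : ℂ))ᵀ
          (CPAux.CmatC n1 n2 (ρ22 : ℂ) 1 (ρ22 : ℂ))), ← hP, ← Matrix.mul_assoc, hsim]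
  rw [hexp, CPAux.charpoly_similar _ _ _ hP,
    CPAux.fromBlocks_diag_eq_reindex, Matrix.charpoly_reindex,
    CPAux.charpoly_blockDiagonal, Polynomial.map_prod]
  refine Finset.prod_congr rfl fun q _ => ?_
  rw [CPAux.charpoly_fin2]
  simp only [Polynomial.map_add, Polynomial.map_sub, Polynomial.map_mul, Polynomial.map_pow,
    Polynomial.map_X, Polynomial.map_C]
  have hwq : CPAux.wf n1 n2 q = w q := by
    rw [hw q, CPAux.wf, CPAux.rt_pow_exp n2 _ hn2, CPAux.rt_pow_exp n1 _ hn1]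
  have hBfq : (φ : ℂ) + (ρ12 : ℂ) * CPAux.wf n1 n2 q + (ρ21 : ℂ) * star (CPAux.wf n1 n2 q)
      = b q := by
    rw [hb q, hwq]
    rfl
  have hBgq : (φ : ℂ) + (ρ21 : ℂ) * CPAux.wf n1 n2 q + (ρ12 : ℂ) * star (CPAux.wf n1 n2 q)
      = star (b q) := by
    have hsr : ∀ r : ℝ, star ((r : ℝ) : ℂ) = ((r : ℝ) : ℂ) := fun r => Complex.conj_ofReal r
    have hse : ∀ z : ℂ, (starRingEnd ℂ) z = star z := fun z => rfl
    rw [hb q, hwq, hse, star_add, star_add, star_mul', star_mul', star_star, hsr, hsr, hsr]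
    ring
  have hws := CPAux.wf_add_star n1 n2 hn1 hn2 q
  have hAfq : (1 : ℂ) + (ρ11 : ℂ) * CPAux.wf n1 n2 q + (ρ11 : ℂ) * star (CPAux.wf n1 n2 q)
      = ((a q : ℝ) : ℂ) := by
    rw [ha q]
    push_cast
    rw [show (1 : ℂ) + (ρ11 : ℂ) * CPAux.wf n1 n2 q + (ρ11 : ℂ) * star (CPAux.wf n1 n2 q)
        = 1 + (ρ11 : ℂ) * (CPAux.wf n1 n2 q + star (CPAux.wf n1 n2 q)) by ring, hws]
    push_cast
    ring
  have hDfq : (1 : ℂ) + (ρ22 : ℂ) * CPAux.wf n1 n2 q + (ρ22 : ℂ) * star (CPAux.wf n1 n2 q)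
      = ((d q : ℝ) : ℂ) := by
    rw [hd q]
    push_cast
    rw [show (1 : ℂ) + (ρ22 : ℂ) * CPAux.wf n1 n2 q + (ρ22 : ℂ) * star (CPAux.wf n1 n2 q)
        = 1 + (ρ22 : ℂ) * (CPAux.wf n1 n2 q + star (CPAux.wf n1 n2 q)) by ring, hws]
    push_cast
    ring
  rw [hAfq, hDfq, hBfq, hBgq]
  have habs : b q * star (b q) = ((‖b q‖ ^ 2 : ℝ) : ℂ) := by
    rw [show star (b q) = (starRingEnd ℂ) (b q) from rfl, Complex.mul_conj, Complex.sq_norm]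
  rw [habs]
  simp only [Complex.coe_algebraMap]
  push_cast
  ring
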